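/- Let J be a factor reflexive closed subspace of a Banach space X (i.e., X/J is reflexive). If (X,J) has the CQLP, then (X**, J^⊥⊥) has the CQLP. -/

import Mathlib

open NormedSpace

/-- (X,J) has the compact quotient lifting property (CQLP). -/
def HasCQLP (X : Type*) [NormedAddCommGroup X] [NormedSpace ℝ X] (J : Submodule ℝ X) : Prop :=
  ∀ (Z : Type) [NormedAddCommGroup Z] [NormedSpace ℝ Z] [CompleteSpace Z]
    (T : Z →L[ℝ] X ⧸ J), IsCompactOperator T → ∃ S : Z →L[ℝ] X, IsCompactOperator S ∧
      (∀ z : Z, (Submodule.Quotient.mk (S z) : X ⧸ J) = T z) ∧ ‖S‖ = ‖T‖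

/-- The double annihilator J^⊥⊥ of a subspace J, as a subspace of the bidual X**. -/
noncomputable def doubleAnn (X : Type*) [NormedAddCommGroup X] [NormedSpace ℝ X] (J : Submodule ℝ X) :
    Submodule ℝ (StrongDual ℝ (StrongDual ℝ X)) where
  carrier := {Ψ | ∀ φ : StrongDual ℝ X, (∀ x ∈ J, φ x = 0) → Ψ φ = 0}
  add_mem' := by intro f g hf hg φ hφ; simp [hf φ hφ, hg φ hφ]
  zero_mem' := by intro φ hφ; simp
  smul_mem' := by intro c f hf φ hφ; simp [hf φ hφ]

/-- The topological dual, with the instances of a normed space. -/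
abbrev Dual (𝕜 : Type*) [NontriviallyNormedField 𝕜] (E : Type*) [SeminormedAddCommGroup E]
    [NormedSpace 𝕜 E] : Type _ := E →L[𝕜] 𝕜

/-- The quotient `Y ⧸ K`, with the instances that `HasCQLP` uses. -/
abbrev cqlpQT (Y : Type*) [NormedAddCommGroup Y] [NormedSpace ℝ Y] (K : Submodule ℝ Y) : Type _ :=
  Y ⧸ K

/-- Linear isometries out of `Y ⧸ K`, with the instances that `HasCQLP` uses. -/
abbrev cqlpLIT (Y : Type*) [NormedAddCommGroup Y] [NormedSpace ℝ Y] (K : Submodule ℝ Y) (G : Type*)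
    [SeminormedAddCommGroup G] [NormedSpace ℝ G] : Type _ :=
  (Y ⧸ K) →ₗᵢ[ℝ] G

/-- J^⊥⊥, as a submodule of the bidual with its normed-space instances. -/
noncomputable abbrev cqlpAnn (X : Type*) [NormedAddCommGroup X] [NormedSpace ℝ X] (J : Submodule ℝ X) :
    Submodule ℝ (Dual ℝ (Dual ℝ X)) := doubleAnn X J

lemma cqlp_comp_norm {E F G : Type*} [SeminormedAddCommGroup E] [SeminormedAddCommGroup F]
    [SeminormedAddCommGroup G] [NormedSpace ℝ E] [NormedSpace ℝ F] [NormedSpace ℝ G]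
    (f : F →ₗᵢ[ℝ] G) (g : E →L[ℝ] F) : ‖f.toContinuousLinearMap.comp g‖ = ‖g‖ :=
  ContinuousLinearMap.opNorm_ext _ g fun x => by
    simp [f.norm_map]

lemma cqlp_comp_norm_quot (Y : Type*) [NormedAddCommGroup Y] [NormedSpace ℝ Y] (K : Submodule ℝ Y)
    (Z : Type) [NormedAddCommGroup Z] [NormedSpace ℝ Z] {G : Type*} [SeminormedAddCommGroup G]
    [NormedSpace ℝ G] (f : cqlpLIT Y K G) (T : Z →L[ℝ] Y ⧸ K) :
    ‖f.toContinuousLinearMap.comp T‖ = ‖T‖ :=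
  cqlp_comp_norm f T

section Aux

variable (X : Type*) [NormedAddCommGroup X] [NormedSpace ℝ X] (J : Submodule ℝ X)

/-- The quotient map as a continuous linear map. -/
noncomputable def cqlpMkQ : X →L[ℝ] X ⧸ J :=
  J.mkQ.mkContinuous 1 (fun x => by
    simpa using Submodule.Quotient.norm_mk_le J x)

@[simp] lemma cqlpMkQ_apply (x : X) :
    cqlpMkQ X J x = Submodule.Quotient.mk x := rfl

/-- The adjoint of the quotient map. -/
noncomputable def cqlpPiD : Dual ℝ (X ⧸ J) →L[ℝ] Dual ℝ X :=
  (ContinuousLinearMap.compL ℝ X (X ⧸ J) ℝ).flip (cqlpMkQ X J)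

@[simp] lemma cqlpPiD_apply (ψ : Dual ℝ (X ⧸ J)) (x : X) :
    cqlpPiD X J ψ x = ψ (Submodule.Quotient.mk x) := rfl

/-- The double adjoint Q : X** → (X/J)**, as a linear map. -/
noncomputable def cqlpQ : Dual ℝ (Dual ℝ X) →ₗ[ℝ] Dual ℝ (Dual ℝ (X ⧸ J)) where
  toFun Ψ := Ψ.comp (cqlpPiD X J)
  map_add' Ψ₁ Ψ₂ := by ext ψ; simp
  map_smul' c Ψ := by ext ψ; simp

@[simp] lemma cqlpQ_apply (Ψ : Dual ℝ (Dual ℝ X)) (ψ : Dual ℝ (X ⧸ J)) :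
    cqlpQ X J Ψ ψ = Ψ (cqlpPiD X J ψ) := rfl

lemma cqlpPiD_mem_ann (ψ : Dual ℝ (X ⧸ J)) : ∀ x ∈ J, cqlpPiD X J ψ x = 0 := by
  intro x hx
  simp [(Submodule.Quotient.mk_eq_zero J).2 hx]

/-- Every functional vanishing on J factors through the quotient, with norm control. -/
lemma cqlp_exists_lift (φ : Dual ℝ X) (hφ : ∀ x ∈ J, φ x = 0) :
    ∃ ψ : Dual ℝ (X ⧸ J), cqlpPiD X J ψ = φ ∧ ‖ψ‖ ≤ ‖φ‖ := by
  have hker : J ≤ LinearMap.ker (φ : X →ₗ[ℝ] ℝ) := fun x hx => hφ x hx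
  set ψlin : (X ⧸ J) →ₗ[ℝ] ℝ := J.liftQ (φ : X →ₗ[ℝ] ℝ) hker with hψlin
  have hbound : ∀ xq : X ⧸ J, ‖ψlin xq‖ ≤ ‖φ‖ * ‖xq‖ := by
    intro xq
    refine le_of_forall_pos_le_add (fun ε hε => ?_)
    rcases lt_or_ge ‖φ‖ 0 with hn | hn
    · exact absurd (norm_nonneg φ) (not_le.2 hn)
    rcases eq_or_lt_of_le hn with hn0 | hn0
    · -- ‖φ‖ = 0 so φ = 0
      have : φ = 0 := by
        rwa [eq_comm, norm_eq_zero] at hn0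
      obtain ⟨m, rfl⟩ := Submodule.Quotient.mk_surjective J xq
      have : ψlin (Submodule.Quotient.mk m) = φ m := rfl
      simp only [this]
      rw [‹φ = 0›]
      simpa using by positivity
    · have hε' : 0 < ε / ‖φ‖ := div_pos hε hn0
      obtain ⟨m, hm, hmn⟩ := Submodule.Quotient.norm_mk_lt xq hε'
      have : ψlin xq = φ m := by rw [← hm]; rfl
      rw [this]
      calc ‖φ m‖ ≤ ‖φ‖ * ‖m‖ := φ.le_opNorm m
        _ ≤ ‖φ‖ * (‖xq‖ + ε / ‖φ‖) := by
            exact mul_le_mul_of_nonneg_left hmn.le (norm_nonneg φ)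
        _ = ‖φ‖ * ‖xq‖ + ε := by field_simp
  refine ⟨ψlin.mkContinuous ‖φ‖ hbound, ?_, ?_⟩
  · ext x
    simp only [cqlpPiD_apply]
    rfl
  · exact (ψlin.mkContinuous_norm_le (norm_nonneg φ) hbound)

lemma cqlpQ_norm_le (Ψ : Dual ℝ (Dual ℝ X)) : ‖cqlpQ X J Ψ‖ ≤ ‖Ψ‖ := by
  refine ContinuousLinearMap.opNorm_le_bound _ (norm_nonneg Ψ) (fun ψ => ?_)
  calc ‖Ψ (cqlpPiD X J ψ)‖ ≤ ‖Ψ‖ * ‖cqlpPiD X J ψ‖ := Ψ.le_opNorm _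
    _ ≤ ‖Ψ‖ * ‖ψ‖ := by
        refine mul_le_mul_of_nonneg_left ?_ (norm_nonneg Ψ)
        refine ContinuousLinearMap.opNorm_le_bound _ (norm_nonneg ψ) (fun x => ?_)
        calc ‖ψ (Submodule.Quotient.mk x)‖ ≤ ‖ψ‖ * ‖(Submodule.Quotient.mk x : X ⧸ J)‖ :=
              ψ.le_opNorm _
          _ ≤ ‖ψ‖ * ‖x‖ := mul_le_mul_of_nonneg_left
              (Submodule.Quotient.norm_mk_le J x) (norm_nonneg ψ)

lemma cqlp_ann_le_ker : doubleAnn X J ≤ LinearMap.ker (cqlpQ X J) := by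
  intro Ψ hΨ
  have : ∀ ψ : Dual ℝ (X ⧸ J), Ψ (cqlpPiD X J ψ) = 0 := fun ψ =>
    hΨ (cqlpPiD X J ψ) (cqlpPiD_mem_ann X J ψ)
  ext ψ
  simpa using this ψ

lemma cqlp_mem_ann_iff (Ψ : Dual ℝ (Dual ℝ X)) :
    Ψ ∈ doubleAnn X J ↔ cqlpQ X J Ψ = 0 := by
  constructor
  · exact fun h => cqlp_ann_le_ker X J h
  · intro h φ hφ
    obtain ⟨ψ, hψ, -⟩ := cqlp_exists_lift X J φ hφ
    have := DFunLike.congr_fun h ψ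
    simpa [hψ] using this

/-- The key isometry: the quotient norm of Ψ mod J^⊥⊥ equals ‖Q Ψ‖. -/
lemma cqlp_norm_eq (Ψ : Dual ℝ (Dual ℝ X)) :
    ‖(Submodule.Quotient.mk Ψ : cqlpQT (StrongDual ℝ (StrongDual ℝ X)) (doubleAnn X J))‖ = ‖cqlpQ X J Ψ‖ := by
  apply le_antisymm
  · -- find a Hahn-Banach extension
    set Jperp : Submodule ℝ (Dual ℝ X) :=
      { carrier := {φ | ∀ x ∈ J, φ x = 0}
        add_mem' := by intro f g hf hg x hx; simp [hf x hx, hg x hx]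
        zero_mem' := by intro x hx; simp
        smul_mem' := by intro c f hf x hx; simp [hf x hx] } with hJperp
    set rest : Jperp →L[ℝ] ℝ := Ψ.comp Jperp.subtypeL with hrest
    letI : Norm (Jperp →L[ℝ] ℝ) := ContinuousLinearMap.hasOpNorm (𝕜 := ℝ) (𝕜₂ := ℝ) (E := Jperp) (F := ℝ)
    have hrestle : ‖rest‖ ≤ ‖cqlpQ X J Ψ‖ := by
      refine ContinuousLinearMap.opNorm_le_bound _ (norm_nonneg _) (fun φ => ?_)
      obtain ⟨ψ, hψ, hψn⟩ := cqlp_exists_lift X J (φ : Dual ℝ X) φ.2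
      have : rest φ = cqlpQ X J Ψ ψ := by simp [hrest, hψ]
      rw [this]
      calc ‖cqlpQ X J Ψ ψ‖ ≤ ‖cqlpQ X J Ψ‖ * ‖ψ‖ := (cqlpQ X J Ψ).le_opNorm ψ
        _ ≤ ‖cqlpQ X J Ψ‖ * ‖φ‖ := mul_le_mul_of_nonneg_left hψn (norm_nonneg _)
    obtain ⟨Φ, hΦ, hΦn⟩ := exists_extension_norm_eq Jperp rest
    have hmem : Ψ - Φ ∈ doubleAnn X J := by
      intro φ hφ
      have : Φ φ = rest ⟨φ, hφ⟩ := hΦ ⟨φ, hφ⟩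
      simp [this, hrest]
    have : (Submodule.Quotient.mk Ψ : cqlpQT (StrongDual ℝ (StrongDual ℝ X)) (doubleAnn X J))
        = Submodule.Quotient.mk Φ := by
      rw [Submodule.Quotient.eq]
      exact hmem
    rw [this]
    calc ‖(Submodule.Quotient.mk Φ : cqlpQT (StrongDual ℝ (StrongDual ℝ X)) (doubleAnn X J))‖ ≤ ‖Φ‖ :=
          Submodule.Quotient.norm_mk_le _ Φ
      _ = ‖rest‖ := hΦn
      _ ≤ ‖cqlpQ X J Ψ‖ := hrestle
  · refine le_of_forall_pos_le_add (fun ε hε => ?_)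
    obtain ⟨Θ, hΘ, hΘn⟩ := Submodule.Quotient.norm_mk_lt
      (Submodule.Quotient.mk Ψ : cqlpQT (StrongDual ℝ (StrongDual ℝ X)) (doubleAnn X J)) hε
    have hQ : cqlpQ X J Ψ = cqlpQ X J Θ := by
      have : Θ - Ψ ∈ doubleAnn X J := (Submodule.Quotient.eq _).1 hΘ
      have h0 : cqlpQ X J (Θ - Ψ) = 0 := cqlp_ann_le_ker X J this
      have h1 : cqlpQ X J Θ - cqlpQ X J Ψ = 0 := by rw [← map_sub]; exact h0
      exact (sub_eq_zero.1 h1).symm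
    rw [hQ]
    calc ‖cqlpQ X J Θ‖ ≤ ‖Θ‖ := cqlpQ_norm_le X J Θ
      _ ≤ ‖(Submodule.Quotient.mk Ψ : cqlpQT (StrongDual ℝ (StrongDual ℝ X)) (doubleAnn X J))‖ + ε := hΘn.le

/-- Q̄ as a linear isometry from X**/J^⊥⊥ to (X/J)**. -/
noncomputable def cqlpQbar :
    cqlpLIT (StrongDual ℝ (StrongDual ℝ X)) (doubleAnn X J) (Dual ℝ (Dual ℝ (X ⧸ J))) where
  toLinearMap := (cqlpAnn X J).liftQ (cqlpQ X J) (cqlp_ann_le_ker X J)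
  norm_map' := by
    intro ξ
    obtain ⟨Ψ, rfl⟩ := Submodule.Quotient.mk_surjective _ ξ
    have : ((cqlpAnn X J).liftQ (cqlpQ X J) (cqlp_ann_le_ker X J))
        (Submodule.Quotient.mk Ψ) = cqlpQ X J Ψ := rfl
    rw [this, ← cqlp_norm_eq]

@[simp] lemma cqlpQbar_mk (Ψ : Dual ℝ (Dual ℝ X)) :
    cqlpQbar X J (Submodule.Quotient.mk Ψ) = cqlpQ X J Ψ := rfl

lemma cqlpQ_inclusion (x : X) :
    cqlpQ X J (inclusionInDoubleDual ℝ X x)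
      = inclusionInDoubleDual ℝ (X ⧸ J) (Submodule.Quotient.mk x) := by
  ext ψ
  simp [dual_def]

end Aux

/-- If J is a factor reflexive closed subspace of X (i.e. X/J is reflexive)
and (X,J) has the CQLP, then (X**, J^⊥⊥) has the CQLP. -/
theorem stmt_9 (X : Type*) [NormedAddCommGroup X] [NormedSpace ℝ X] [CompleteSpace X]
    (J : Submodule ℝ X) (hJ : IsClosed (J : Set X))
    (hrefl : Function.Surjective (inclusionInDoubleDual ℝ (X ⧸ J)))
    (h : HasCQLP X J) : HasCQLP (StrongDual ℝ (StrongDual ℝ X)) (doubleAnn X J) := by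
  intro Z _ _ _ T hT
  haveI := hJ
  -- the isometric identification of (X/J)** with X/J
  have hsurj : Function.Surjective (inclusionInDoubleDualLi ℝ (E := X ⧸ J)) := hrefl
  set e := (LinearIsometryEquiv.ofSurjective (inclusionInDoubleDualLi ℝ (E := X ⧸ J)) hsurj).symm
    with he
  have he_inv : ∀ y : Dual ℝ (Dual ℝ (X ⧸ J)),
      inclusionInDoubleDual ℝ (X ⧸ J) (e y) = y := by
    intro y
    have h1 := (LinearIsometryEquiv.ofSurjective (inclusionInDoubleDualLi ℝ (E := X ⧸ J))
      hsurj).apply_symm_apply y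
    exact h1
  -- transfer T to a compact operator into X/J
  set T' : Z →L[ℝ] X ⧸ J :=
    (e.toLinearIsometry.toContinuousLinearMap).comp
      ((cqlpQbar X J).toContinuousLinearMap.comp T) with hT'
  have hT'c : IsCompactOperator T' := by
    have h1 : IsCompactOperator ((cqlpQbar X J).toContinuousLinearMap ∘ T) :=
      hT.continuous_comp (cqlpQbar X J).toContinuousLinearMap.continuous
    have h2 : IsCompactOperator
        (e.toLinearIsometry.toContinuousLinearMap ∘
          ((cqlpQbar X J).toContinuousLinearMap ∘ T)) :=
      h1.continuous_comp e.toLinearIsometry.toContinuousLinearMap.continuous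
    exact h2
  have hT'n := (cqlp_comp_norm e.toLinearIsometry ((cqlpQbar X J).toContinuousLinearMap.comp T)).trans
    (cqlp_comp_norm_quot _ _ Z (cqlpQbar X J) T)
  obtain ⟨S', hS'c, hS'lift, hS'n⟩ := h Z T' hT'c
  refine ⟨(inclusionInDoubleDualLi ℝ (E := X)).toContinuousLinearMap.comp S', ?_, ?_, ?_⟩
  · exact hS'c.clm_comp (inclusionInDoubleDualLi ℝ (E := X)).toContinuousLinearMap
  · intro z
    obtain ⟨Ψ, hΨ⟩ := Submodule.Quotient.mk_surjective _ (T z)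
    rw [← hΨ, Submodule.Quotient.eq]
    rw [cqlp_mem_ann_iff]
    rw [map_sub, sub_eq_zero]
    have h1 : cqlpQ X J ((inclusionInDoubleDualLi ℝ (E := X)).toContinuousLinearMap.comp S' z)
        = inclusionInDoubleDual ℝ (X ⧸ J) (Submodule.Quotient.mk (S' z)) := by
      exact cqlpQ_inclusion X J (S' z)
    rw [h1, hS'lift z]
    have h2 : cqlpQ X J Ψ = cqlpQbar X J (T z) := by rw [← hΨ]; rfl
    rw [h2, hT']
    simp only [ContinuousLinearMap.coe_comp', Function.comp_apply,
      LinearIsometry.coe_toContinuousLinearMap, LinearIsometryEquiv.coe_toLinearIsometry]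
    exact he_inv _
  · exact (cqlp_comp_norm _ _).trans (hS'n.trans hT'n)
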